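/- Define the aggregated process Y_A = M_A + ε'_A where ε'_A is an independent copy of Y - M_A. Suppose M_A(x) = g_x(Y(X)) for a deterministic measurable function g_x for every x, and M_A(X) = Y(X) (interpolation). Then E[Y_A(x) | Y_A(X)] = M_A(x) and Var(Y_A(x) | Y_A(X)) = v_A(x) = E[(Y(x) - M_A(x))^2]. -/

import Mathlib

open MeasureTheory ProbabilityTheory
open scoped Classical

/-- Doob–Dynkin style factorization for real-valued functions. -/
lemma doob_dynkin_real {Ω β : Type*} [mβ : MeasurableSpace β] {f : Ω → β} {g : Ω → ℝ}
    (hg : Measurable[MeasurableSpace.comap f mβ] g) :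
    ∃ h : β → ℝ, Measurable h ∧ ∀ ω, h (f ω) = g ω := by
  have hsets : ∀ q : ℚ, ∃ B : Set β, MeasurableSet B ∧ f ⁻¹' B = {ω | g ω ≤ (q : ℝ)} := by
    intro q
    exact hg measurableSet_Iic
  choose B hBmeas hBpre using hsets
  set H : β → EReal := fun y => ⨅ q : ℚ, if y ∈ B q then ((q : ℝ) : EReal) else ⊤ with hH
  have hHmeas : Measurable H := by
    refine Measurable.iInf fun q => Measurable.ite (hBmeas q) measurable_const measurable_const
  refine ⟨fun y => (H y).toReal, hHmeas.ereal_toReal, fun ω => ?_⟩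
  have hmem : ∀ q : ℚ, f ω ∈ B q ↔ g ω ≤ (q : ℝ) := by
    intro q
    constructor
    · intro h
      have : ω ∈ f ⁻¹' B q := h
      rwa [hBpre q] at this
    · intro h
      have : ω ∈ f ⁻¹' B q := by rw [hBpre q]; exact h
      exact this
  have hval : H (f ω) = ((g ω : ℝ) : EReal) := by
    apply le_antisymm
    · by_contra hlt
      push_neg at hlt
      obtain ⟨q, hq1, hq2⟩ := EReal.exists_rat_btwn_of_lt hlt
      have hle : g ω ≤ (q : ℝ) := le_of_lt (by exact_mod_cast hq1)
      have : H (f ω) ≤ ((q : ℝ) : EReal) := by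
        refine (iInf_le _ q).trans ?_
        rw [if_pos ((hmem q).2 hle)]
      exact absurd (this.trans_lt hq2) (lt_irrefl _)
    · refine le_iInf fun q => ?_
      by_cases h : f ω ∈ B q
      · rw [if_pos h]
        exact_mod_cast ((hmem q).1 h)
      · rw [if_neg h]; exact le_top
  show (H (f ω)).toReal = g ω
  rw [hval]
  simp

theorem stmt_5 {Ω D : Type*} [MeasurableSpace Ω] (μ : Measure Ω) [IsProbabilityMeasure μ]
    {n : ℕ} (X : Fin n → D)
    (Y MA ε YA : D → Ω → ℝ)
    (hYmeas : ∀ x, Measurable (Y x)) (hεmeas : ∀ x, Measurable (ε x))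
    (hYL2 : ∀ x, MemLp (Y x) 2 μ) (hMAL2 : ∀ x, MemLp (MA x) 2 μ)
    (hεL2 : ∀ x, MemLp (ε x) 2 μ)
    (hYc : ∀ x, ∫ ω, Y x ω ∂μ = 0) (hMAc : ∀ x, ∫ ω, MA x ω ∂μ = 0)
    -- Y_A = M_A + ε'
    (hYA : ∀ x ω, YA x ω = MA x ω + ε x ω)
    -- M_A(x) is a deterministic (measurable) function of Y(X)
    (hMA_meas : ∀ x, Measurable[MeasurableSpace.comap
        (fun ω (i : Fin n) => Y (X i) ω) inferInstance] (MA x))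
    -- interpolation: M_A(X) = Y(X)
    (hinterp : ∀ i, MA (X i) =ᵐ[μ] Y (X i))
    -- ε' has the same law as the process Y - M_A
    (hlaw : Measure.map (fun ω (x : D) => ε x ω) μ =
        Measure.map (fun ω (x : D) => Y x ω - MA x ω) μ)
    -- and is independent of the process (Y, M_A)
    (hindep : Indep
        (MeasurableSpace.comap (fun ω (x : D) => ε x ω) inferInstance)
        (MeasurableSpace.comap (fun ω (x : D) => (Y x ω, MA x ω)) inferInstance) μ) :
    ∀ x : D,
      (μ[YA x | MeasurableSpace.comap (fun ω (i : Fin n) => YA (X i) ω) inferInstance]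
          =ᵐ[μ] MA x) ∧
      (μ[fun ω => (YA x ω - MA x ω) ^ 2 |
            MeasurableSpace.comap (fun ω (i : Fin n) => YA (X i) ω) inferInstance]
          =ᵐ[μ] fun _ => ∫ ω, (Y x ω - MA x ω) ^ 2 ∂μ) := by
  -- basic measurability
  set φY : Ω → (Fin n → ℝ) := fun ω i => Y (X i) ω with hφYdef
  set φA : Ω → (Fin n → ℝ) := fun ω i => YA (X i) ω with hφAdef
  have hφYmeas : Measurable φY := measurable_pi_lambda _ fun i => hYmeas (X i)
  have hMAmeas : ∀ z, Measurable (MA z) := fun z =>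
    (hMA_meas z).mono hφYmeas.comap_le le_rfl
  have hYAeq : ∀ z, YA z = fun ω => MA z ω + ε z ω := fun z => funext (hYA z)
  have hYAmeas : ∀ z, Measurable (YA z) := fun z => by
    rw [hYAeq z]; exact (hMAmeas z).add (hεmeas z)
  have hφAmeas : Measurable φA := measurable_pi_lambda _ fun i => hYAmeas (X i)
  have h𝔪 : MeasurableSpace.comap φA inferInstance ≤ ‹MeasurableSpace Ω› := hφAmeas.comap_le
  haveI : SigmaFinite (μ.trim h𝔪) :=
    haveI := isFiniteMeasure_trim h𝔪 (μ := μ); inferInstance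
  -- process maps
  set Fε : Ω → (D → ℝ) := fun ω x => ε x ω with hFεdef
  have hFεmeas : Measurable Fε := measurable_pi_lambda _ hεmeas
  have hFdmeas : Measurable (fun ω (x : D) => Y x ω - MA x ω) :=
    measurable_pi_lambda _ fun x => (hYmeas x).sub (hMAmeas x)
  -- pointwise law transfer
  have hlawpt : ∀ z, Measure.map (ε z) μ = Measure.map (fun ω => Y z ω - MA z ω) μ := by
    intro z
    have h1 : ε z = (fun f : D → ℝ => f z) ∘ Fε := rfl
    rw [h1, ← Measure.map_map (measurable_pi_apply z) hFεmeas, hlaw,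
      Measure.map_map (measurable_pi_apply z) hFdmeas]
    rfl
  have hmom : ∀ (z) (g : ℝ → ℝ), Measurable g →
      ∫ ω, g (ε z ω) ∂μ = ∫ ω, g (Y z ω - MA z ω) ∂μ := by
    intro z g hg
    rw [← integral_map (hεmeas z).aemeasurable hg.aestronglyMeasurable, hlawpt z,
      integral_map (show Measurable (fun ω => Y z ω - MA z ω) from (hYmeas z).sub (hMAmeas z)).aemeasurable hg.aestronglyMeasurable]
  -- ε vanishes at the design points
  have hε0 : ∀ i, ε (X i) =ᵐ[μ] (fun _ => (0 : ℝ)) := by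
    intro i
    have hd0 : (fun ω => Y (X i) ω - MA (X i) ω) =ᵐ[μ] (fun _ => (0 : ℝ)) :=
      (hinterp i).mono fun ω h => by simp [h]
    have hmap : Measure.map (ε (X i)) μ = Measure.map (fun _ => (0 : ℝ)) μ := by
      rw [hlawpt (X i), Measure.map_congr hd0]
    have hset : MeasurableSet ({(0 : ℝ)}ᶜ) := (measurableSet_singleton 0).compl
    have h1 : μ (ε (X i) ⁻¹' {(0 : ℝ)}ᶜ) = 0 := by
      rw [← Measure.map_apply (hεmeas (X i)) hset, hmap, Measure.map_const]
      simp
    have hsetEq : {ω | ¬ ε (X i) ω = (fun _ => (0 : ℝ)) ω} = ε (X i) ⁻¹' {(0 : ℝ)}ᶜ := by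
      ext ω; simp
    rw [Filter.EventuallyEq, ae_iff, hsetEq]
    exact h1
  -- φA = φY a.e.
  have hφeq : φA =ᵐ[μ] φY := by
    have h : ∀ᵐ ω ∂μ, ∀ i, YA (X i) ω = Y (X i) ω := by
      rw [ae_all_iff]
      intro i
      filter_upwards [hε0 i, hinterp i] with ω h1 h2
      simp [hYA, h1, h2]
    exact h.mono fun ω h => funext fun i => h i
  -- comap φY is below the (Y, MA)-process σ-algebra
  have hproj : Measurable (fun f : D → ℝ × ℝ => (fun i => (f (X i)).1 : Fin n → ℝ)) :=
    measurable_pi_lambda _ fun i => (measurable_pi_apply (X i)).fst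
  have hle : MeasurableSpace.comap φY inferInstance ≤
      MeasurableSpace.comap (fun ω (x : D) => (Y x ω, MA x ω)) inferInstance := by
    have heq : φY = (fun f : D → ℝ × ℝ => (fun i => (f (X i)).1 : Fin n → ℝ)) ∘
        (fun ω (x : D) => (Y x ω, MA x ω)) := rfl
    rw [heq, ← MeasurableSpace.comap_comp]
    exact MeasurableSpace.comap_mono hproj.comap_le
  have hindepY : Indep (MeasurableSpace.comap Fε inferInstance)
      (MeasurableSpace.comap φY inferInstance) μ :=
    indep_of_indep_of_le_right hindep hle
  haveI : SigmaFinite (μ.trim hφYmeas.comap_le) :=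
    haveI := isFiniteMeasure_trim hφYmeas.comap_le (μ := μ); inferInstance
  -- key independence computation
  have key : ∀ f₀ : Ω → ℝ, Measurable[MeasurableSpace.comap Fε inferInstance] f₀ →
      Integrable f₀ μ → ∀ B : Set (Fin n → ℝ), MeasurableSet B →
      ∫ ω in φY ⁻¹' B, f₀ ω ∂μ = (∫ ω, f₀ ω ∂μ) * (μ (φY ⁻¹' B)).toReal := by
    intro f₀ hf₀m hf₀i B hB
    have hce := condExp_indep_eq hFεmeas.comap_le hφYmeas.comap_le
      (Measurable.stronglyMeasurable hf₀m) hindepY (μ := μ)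
    have hs' : MeasurableSet[MeasurableSpace.comap φY inferInstance] (φY ⁻¹' B) := ⟨B, hB, rfl⟩
    calc ∫ ω in φY ⁻¹' B, f₀ ω ∂μ
        = ∫ ω in φY ⁻¹' B, (μ[f₀ | MeasurableSpace.comap φY inferInstance]) ω ∂μ :=
          (setIntegral_condExp hφYmeas.comap_le hf₀i hs').symm
      _ = ∫ _ω in φY ⁻¹' B, (∫ ω, f₀ ω ∂μ) ∂μ :=
          integral_congr_ae (ae_restrict_of_ae hce)
      _ = (∫ ω, f₀ ω ∂μ) * (μ (φY ⁻¹' B)).toReal := by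
          rw [setIntegral_const, smul_eq_mul, mul_comm]; rfl
  -- ε x is measurable w.r.t. the ε-process σ-algebra
  have hεcomap : ∀ z, Measurable[MeasurableSpace.comap Fε inferInstance] (ε z) := fun z =>
    (measurable_pi_apply z).comp (comap_measurable Fε)
  intro x
  -- integrabilities
  have hεint : Integrable (ε x) μ := (hεL2 x).integrable one_le_two
  have hMAint : Integrable (MA x) μ := (hMAL2 x).integrable one_le_two
  have hYAint : Integrable (YA x) μ := by
    rw [hYAeq x]; exact hMAint.add hεint
  have hεmean : ∫ ω, ε x ω ∂μ = 0 := by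
    have h1 := hmom x id measurable_id
    simp only [id] at h1
    have h2 : ∫ ω, (Y x ω - MA x ω) ∂μ = 0 := by
      rw [integral_sub ((hYL2 x).integrable one_le_two) ((hMAL2 x).integrable one_le_two),
        hYc, hMAc, sub_zero]
    exact h1.trans h2
  have hεsqint : Integrable (fun ω => ε x ω ^ 2) μ := (hεL2 x).integrable_sq
  have hεsq : ∫ ω, ε x ω ^ 2 ∂μ = ∫ ω, (Y x ω - MA x ω) ^ 2 ∂μ :=
    hmom x (fun t => t ^ 2) (measurable_id.pow_const 2)
  -- the 𝔪-measurable version of MA x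
  obtain ⟨h, hhmeas, hh⟩ := doob_dynkin_real (hMA_meas x)
  have hgMA : (fun ω => h (φA ω)) =ᵐ[μ] MA x :=
    hφeq.mono fun ω hω => by show h (φA ω) = MA x ω; rw [hω]; exact hh ω
  have hgmeas : Measurable[MeasurableSpace.comap φA inferInstance] fun ω => h (φA ω) :=
    hhmeas.comp (comap_measurable φA)
  -- set conversion
  have hset_ae : ∀ B : Set (Fin n → ℝ), (φA ⁻¹' B : Set Ω) =ᵐ[μ] (φY ⁻¹' B : Set Ω) := by
    intro B
    rw [Filter.eventuallyEq_set]
    exact hφeq.mono fun ω hω => by rw [Set.mem_preimage, Set.mem_preimage, hω]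
  constructor
  · -- conditional expectation
    have hmain : (fun ω => h (φA ω)) =ᵐ[μ] μ[YA x | MeasurableSpace.comap φA inferInstance] := by
      refine ae_eq_condExp_of_forall_setIntegral_eq h𝔪 hYAint
        (fun s _ _ => (hMAint.congr hgMA.symm).integrableOn) (fun s hs _ => ?_)
        ⟨fun ω => h (φA ω), hgmeas.stronglyMeasurable, Filter.EventuallyEq.rfl⟩
      obtain ⟨B, hB, rfl⟩ := hs
      have h1 : ∫ ω in φA ⁻¹' B, h (φA ω) ∂μ = ∫ ω in φA ⁻¹' B, MA x ω ∂μ :=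
        integral_congr_ae (ae_restrict_of_ae hgMA)
      have h2 : ∫ ω in φA ⁻¹' B, YA x ω ∂μ
          = ∫ ω in φA ⁻¹' B, MA x ω ∂μ + ∫ ω in φA ⁻¹' B, ε x ω ∂μ := by
        rw [hYAeq x]
        exact integral_add hMAint.integrableOn hεint.integrableOn
      have h3 : ∫ ω in φA ⁻¹' B, ε x ω ∂μ = 0 := by
        rw [setIntegral_congr_set (hset_ae B), key (ε x) (hεcomap x) hεint B hB, hεmean,
          zero_mul]
      rw [h1, h2, h3, add_zero]
    exact hmain.symm.trans hgMA
  · -- conditional variance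
    have hfun : (fun ω => (YA x ω - MA x ω) ^ 2) = fun ω => ε x ω ^ 2 := by
      funext ω; rw [hYA]; ring
    have hsqcomap : Measurable[MeasurableSpace.comap Fε inferInstance]
        fun ω => ε x ω ^ 2 := (hεcomap x).pow_const 2
    have hmain : (fun _ : Ω => ∫ ω, ε x ω ^ 2 ∂μ) =ᵐ[μ] μ[fun ω => ε x ω ^ 2 | MeasurableSpace.comap φA inferInstance] := by
      refine ae_eq_condExp_of_forall_setIntegral_eq h𝔪 hεsqint
        (fun s _ hsfin => integrableOn_const hsfin.ne) (fun s hs _ => ?_)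
        stronglyMeasurable_const.aestronglyMeasurable
      obtain ⟨B, hB, rfl⟩ := hs
      rw [setIntegral_const, Measure.real, setIntegral_congr_set (hset_ae B),
        key _ hsqcomap hεsqint B hB, measure_congr (hset_ae B), smul_eq_mul, mul_comm]
    rw [hfun, ← hεsq]
    exact hmain.symm
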